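/- (Counting strip decompositions of a broken ribbon) Let λ ⊆ λ⁺ be partitions such that λ⁺/λ is a broken ribbon. Then the number of partitions λ' with λ ⊆ λ' ⊆ λ⁺ such that λ'/λ is a horizontal strip and λ⁺/λ' is a vertical strip equals 2^{rib(λ⁺/λ)}. Moreover, every such λ' satisfies |λ⁺/λ'| ≥ hgt(λ⁺/λ). -/

import Mathlib

open scoped Classical

noncomputable section

/-- The cells of the skew diagram `lam / mu`. -/
def skewCells (mu lam : YoungDiagram) : Finset (ℕ × ℕ) := lam.cells \ mu.cells

/-- The size `|lam / mu|` of the skew diagram. -/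
def skewSize (mu lam : YoungDiagram) : ℕ := (skewCells mu lam).card

/-- `lam/mu` is a horizontal strip: no vertical domino. -/
def IsHorizontalStrip (mu lam : YoungDiagram) : Prop :=
  ∀ i j : ℕ, ¬((i, j) ∈ skewCells mu lam ∧ (i + 1, j) ∈ skewCells mu lam)

/-- `lam/mu` is a vertical strip: no horizontal domino. -/
def IsVerticalStrip (mu lam : YoungDiagram) : Prop :=
  ∀ i j : ℕ, ¬((i, j) ∈ skewCells mu lam ∧ (i, j + 1) ∈ skewCells mu lam)

/-- `lam/mu` is a broken ribbon: no 2×2 block. -/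
def IsBrokenRibbon (mu lam : YoungDiagram) : Prop :=
  ∀ i j : ℕ, ¬((i, j) ∈ skewCells mu lam ∧ (i, j + 1) ∈ skewCells mu lam ∧
      (i + 1, j) ∈ skewCells mu lam ∧ (i + 1, j + 1) ∈ skewCells mu lam)

/-- Edge-adjacency of lattice cells. -/
def CellAdj (c d : ℕ × ℕ) : Prop :=
  (c.1 = d.1 ∧ (c.2 = d.2 + 1 ∨ d.2 = c.2 + 1)) ∨
  (c.2 = d.2 ∧ (c.1 = d.1 + 1 ∨ d.1 = c.1 + 1))

/-- The setoid relating cells in the same edge-connected component of `S`. -/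
def componentSetoid (S : Finset (ℕ × ℕ)) : Setoid {c : ℕ × ℕ // c ∈ S} :=
  Relation.EqvGen.setoid (fun x y => CellAdj x.1 y.1)

/-- Edge-connected components of a finite set of cells. -/
def SkewComponents (S : Finset (ℕ × ℕ)) : Type := Quotient (componentSetoid S)

/-- The number of edge-connected components of `S`. -/
def ribSet (S : Finset (ℕ × ℕ)) : ℕ := Nat.card (SkewComponents S)

/-- Pairs (component of `S`, index of a nonempty row of that component). -/
def componentRowPairs (S : Finset (ℕ × ℕ)) : Type :=
  {p : SkewComponents S × ℕ //
    ∃ c : {c : ℕ × ℕ // c ∈ S}, Quotient.mk (componentSetoid S) c = p.1 ∧ c.1.1 = p.2}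

/-- Pairs (component of `S`, index of a nonempty column of that component). -/
def componentColPairs (S : Finset (ℕ × ℕ)) : Type :=
  {p : SkewComponents S × ℕ //
    ∃ c : {c : ℕ × ℕ // c ∈ S}, Quotient.mk (componentSetoid S) c = p.1 ∧ c.1.2 = p.2}

/-- Sum over components of (number of nonempty rows − 1). -/
def hgtSet (S : Finset (ℕ × ℕ)) : ℕ := Nat.card (componentRowPairs S) - ribSet S

/-- Sum over components of (number of nonempty columns − 1). -/
def wtSet (S : Finset (ℕ × ℕ)) : ℕ := Nat.card (componentColPairs S) - ribSet S

/-- rib(lam/mu): number of ribbon components of the broken ribbon `lam/mu`. -/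
def rib (mu lam : YoungDiagram) : ℕ := ribSet (skewCells mu lam)

/-- hgt(lam/mu). -/
def hgt (mu lam : YoungDiagram) : ℕ := hgtSet (skewCells mu lam)

/-- wt(lam/mu). -/
def wt (mu lam : YoungDiagram) : ℕ := wtSet (skewCells mu lam)

/-- `lam/mu` is a ribbon: nonempty, no 2×2 block, and edge-connected. -/
def IsRibbon (mu lam : YoungDiagram) : Prop :=
  0 < skewSize mu lam ∧ IsBrokenRibbon mu lam ∧ rib mu lam = 1

/-- A semistandard Young tableau of skew shape `lam/mu`: a filling of the skew cells
with positive integers, weakly increasing along rows, strictly increasing down columns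
(and `0`, i.e. no entry, outside the skew cells). -/
structure SkewSSYT (mu lam : YoungDiagram) where
  entry : ℕ × ℕ → ℕ
  zeros : ∀ c, c ∉ skewCells mu lam → entry c = 0
  pos : ∀ c ∈ skewCells mu lam, 1 ≤ entry c
  rowWeak : ∀ i j, (i, j) ∈ skewCells mu lam → (i, j + 1) ∈ skewCells mu lam →
    entry (i, j) ≤ entry (i, j + 1)
  colStrict : ∀ i j, (i, j) ∈ skewCells mu lam → (i + 1, j) ∈ skewCells mu lam →
    entry (i, j) < entry (i + 1, j)

/-- The number of cells of the tableau `T` with entry `v`. -/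
def countEntry {mu lam : YoungDiagram} (T : SkewSSYT mu lam) (v : ℕ) : ℕ :=
  ((skewCells mu lam).filter (fun c => T.entry c = v)).card

/-- The skew Schur function `s_{lam/mu}`, as a formal power series in variables
`x_1, x_2, …` (variable index `n : ℕ` standing for `x_{n+1}`): the coefficient of
`x_1^(d 0) x_2^(d 1) ⋯` is the number of SSYT of shape `lam/mu` in which entry `i`
occurs exactly `d (i-1)` times. -/
def skewSchur (R : Type*) [CommRing R] (mu lam : YoungDiagram) : MvPowerSeries ℕ R :=
  fun d => (Nat.card {T : SkewSSYT mu lam // ∀ n : ℕ, countEntry T (n + 1) = d n} : R)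

/-- The power sum symmetric function `p_r = x_1^r + x_2^r + ⋯`. -/
def powerSum (R : Type*) [CommRing R] (r : ℕ) : MvPowerSeries ℕ R :=
  fun d => if ∃ n : ℕ, d = Finsupp.single n r then 1 else 0

/-- The quantum power sum `℘_r = ∑_{τ ⊢ r} (-1)^{ℓ(τ)-1} (q-1)^{ℓ(τ)-1} m_τ`,
written coefficientwise: the coefficient at a monomial with exponent vector `d`
of total degree `r` is `(-1)^{ℓ-1} (q-1)^{ℓ-1}` where `ℓ` is the number of
variables occurring in the monomial. -/
def qps (r : ℕ) : MvPowerSeries ℕ (Polynomial ℤ) :=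
  fun d => if (d.sum fun _ v => v) = r then
      (-1 : Polynomial ℤ) ^ (d.support.card - 1) * (Polynomial.X - 1) ^ (d.support.card - 1)
    else 0

/-- The second quantum power sum `p̄_r = ∑_{τ ⊢ r} q^{r-ℓ(τ)} (q-1)^{ℓ(τ)-1} m_τ`. -/
def qps2 (r : ℕ) : MvPowerSeries ℕ (Polynomial ℤ) :=
  fun d => if (d.sum fun _ v => v) = r then
      (Polynomial.X : Polynomial ℤ) ^ (r - d.support.card) *
        (Polynomial.X - 1) ^ (d.support.card - 1)
    else 0

/-- The one-row Young diagram `(r)`. -/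
def rowDiagram (r : ℕ) : YoungDiagram := YoungDiagram.ofRowLens [r] (List.pairwise_singleton _ r).sortedGE

/-- The one-column Young diagram `(1^r)`. -/
def colDiagram (r : ℕ) : YoungDiagram := (rowDiagram r).transpose

theorem sorted_replicate_one (m : ℕ) : List.Pairwise (· ≥ ·) (List.replicate m (1 : ℕ)) := by
  induction m with
  | zero => simp
  | succ n ih =>
    rw [List.replicate_succ, List.pairwise_cons]
    exact ⟨fun b hb => le_of_eq (List.eq_of_mem_replicate hb), ih⟩

/-- The hook Young diagram `(a+1, 1^m)`. -/
def hookDiagram' (a m : ℕ) : YoungDiagram :=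
  YoungDiagram.ofRowLens ((a + 1) :: List.replicate m 1) (by
    rw [List.sortedGE_iff_pairwise, List.pairwise_cons]
    exact ⟨fun b hb => le_trans (le_of_eq (List.eq_of_mem_replicate hb)) (Nat.le_add_left 1 a),
      sorted_replicate_one m⟩)

namespace StripAux

open YoungDiagram

lemma mem_skew (mu nu : YoungDiagram) (i j : ℕ) :
    (i, j) ∈ skewCells mu nu ↔ mu.rowLen i ≤ j ∧ j < nu.rowLen i := by
  simp [skewCells, YoungDiagram.mem_cells, YoungDiagram.mem_iff_lt_rowLen, not_lt, and_comm]

lemma rowLen_le_rowLen {mu nu : YoungDiagram} (h : mu ≤ nu) (i : ℕ) :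
    mu.rowLen i ≤ nu.rowLen i := by
  by_contra hc
  push_neg at hc
  have h1 : (i, nu.rowLen i) ∈ mu := YoungDiagram.mem_iff_lt_rowLen.2 hc
  have h2 : (i, nu.rowLen i) ∈ nu := h h1
  exact absurd (YoungDiagram.mem_iff_lt_rowLen.1 h2) (lt_irrefl _)

section Main

variable (lam lp : YoungDiagram)

/-- Row `i` of the skew shape is nonempty. -/
def NE (i : ℕ) : Prop := lam.rowLen i < lp.rowLen i

/-- Row `i` is the top row of its ribbon component. -/
def Free (i : ℕ) : Prop :=
  NE lam lp i ∧ (i = 0 ∨ lp.rowLen i ≤ lam.rowLen (i - 1))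

/-- Rows `i` and `i+1` of the skew shape are connected. -/
def Conn (i : ℕ) : Prop :=
  NE lam lp i ∧ NE lam lp (i + 1) ∧ lam.rowLen i < lp.rowLen (i + 1)

/-- The top row of the block of row `i`. -/
noncomputable def ftop : ℕ → ℕ
  | 0 => 0
  | (i + 1) => if Conn lam lp i then ftop i else i + 1

/-- The component relation. -/
def Rel : {c // c ∈ skewCells lam lp} → {c // c ∈ skewCells lam lp} → Prop :=
  Relation.EqvGen (fun x y => CellAdj x.1 y.1)

variable {lam lp}

lemma br_step (h : lam ≤ lp) (hbr : IsBrokenRibbon lam lp) (i : ℕ)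
    (hne : NE lam lp (i + 1)) : lp.rowLen (i + 1) ≤ lam.rowLen i + 1 := by
  by_contra hc
  push_neg at hc
  have h2 : lam.rowLen i + 2 ≤ lp.rowLen (i + 1) := hc
  have hb : lp.rowLen (i+1) ≤ lp.rowLen i := lp.rowLen_anti i (i+1) (Nat.le_succ i)
  have ha : lam.rowLen (i+1) ≤ lam.rowLen i := lam.rowLen_anti i (i+1) (Nat.le_succ i)
  refine hbr i (lam.rowLen i) ⟨?_, ?_, ?_, ?_⟩ <;> rw [mem_skew] <;> omega

lemma ftop_le (i : ℕ) : ftop lam lp i ≤ i := by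
  induction i with
  | zero => simp [ftop]
  | succ n ih =>
    rw [ftop]
    split
    · omega
    · omega

lemma ftop_free (h : lam ≤ lp) (i : ℕ) (hi : NE lam lp i) : Free lam lp (ftop lam lp i) := by
  induction i with
  | zero => exact ⟨hi, Or.inl rfl⟩
  | succ n ih =>
    rw [ftop]
    split
    · next hc => exact ih hc.1
    · next hc =>
      refine ⟨hi, Or.inr ?_⟩
      simp only [Nat.add_sub_cancel]
      unfold Conn at hc
      have hb : lp.rowLen (n+1) ≤ lp.rowLen n := lp.rowLen_anti n (n+1) (Nat.le_succ n)
      have hab : lam.rowLen n ≤ lp.rowLen n := rowLen_le_rowLen h n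
      by_contra hlt
      push_neg at hlt
      unfold NE at *
      exact hc ⟨by omega, hi, hlt⟩

lemma ftop_eq_self_of_free (i : ℕ) (hi : Free lam lp i) : ftop lam lp i = i := by
  cases i with
  | zero => rfl
  | succ n =>
    rw [ftop, if_neg]
    intro hc
    rcases hi.2 with h0 | hle
    · exact absurd h0 (Nat.succ_ne_zero n)
    · simp only [Nat.add_sub_cancel] at hle
      exact absurd hc.2.2 (not_lt.2 hle)

lemma ftop_chain (i' : ℕ) : ∀ i, i ≤ i' → ftop lam lp i' ≤ i →
    ftop lam lp i' = ftop lam lp i ∧ ∀ k, i ≤ k → k < i' → Conn lam lp k := by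
  induction i' with
  | zero => intro i h1 _; interval_cases i; exact ⟨rfl, by omega⟩
  | succ n ih =>
    intro i h1 h2
    rcases Nat.eq_or_lt_of_le h1 with rfl | hlt
    · exact ⟨rfl, by omega⟩
    · have hcond : Conn lam lp n := by
        by_contra hc
        rw [ftop, if_neg hc] at h2
        omega
      have heq : ftop lam lp (n+1) = ftop lam lp n := by rw [ftop, if_pos hcond]
      rw [heq] at h2 ⊢
      obtain ⟨e1, e2⟩ := ih i (by omega) h2
      refine ⟨e1, fun k hk1 hk2 => ?_⟩
      rcases Nat.lt_or_ge k n with hkn | hkn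
      · exact e2 k hk1 hkn
      · have : k = n := by omega
        subst this; exact hcond

/-- Abbreviation for the skew cells. -/
local notation "S" => skewCells lam lp

lemma rel_refl (c : {c // c ∈ skewCells lam lp}) : Rel lam lp c c := Relation.EqvGen.refl c

lemma rel_symm {c d : {c // c ∈ skewCells lam lp}} (h : Rel lam lp c d) : Rel lam lp d c :=
  Relation.EqvGen.symm c d h

lemma rel_trans {c d e : {c // c ∈ skewCells lam lp}} (h1 : Rel lam lp c d)
    (h2 : Rel lam lp d e) : Rel lam lp c e := Relation.EqvGen.trans c d e h1 h2

lemma rel_adj {c d : {c // c ∈ skewCells lam lp}} (h : CellAdj c.1 d.1) : Rel lam lp c d :=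
  Relation.EqvGen.rel c d h

lemma ne_of_mem {i j : ℕ} (hc : (i, j) ∈ S) : NE lam lp i := by
  rw [mem_skew] at hc; exact lt_of_le_of_lt hc.1 hc.2

lemma rel_of_row {i j j' : ℕ} (hc : (i, j) ∈ S) (hd : (i, j') ∈ S) :
    Rel lam lp ⟨(i, j), hc⟩ ⟨(i, j'), hd⟩ := by
  rcases le_total j j' with hle | hle
  · revert hd
    induction j' , hle using Nat.le_induction with
    | base => exact fun hd => Relation.EqvGen.refl _
    | succ m hm ih =>
      intro hd
      rw [mem_skew] at hc hd
      have hmid : (i, m) ∈ S := by rw [mem_skew]; omega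
      refine Relation.EqvGen.trans _ _ _ (ih hmid) (Relation.EqvGen.rel _ _ ?_)
      exact Or.inl ⟨rfl, Or.inr rfl⟩
  · revert hc
    induction j , hle using Nat.le_induction with
    | base => exact fun hc => Relation.EqvGen.refl _
    | succ m hm ih =>
      intro hc
      rw [mem_skew] at hc hd
      have hmid : (i, m) ∈ S := by rw [mem_skew]; omega
      refine Relation.EqvGen.trans _ _ _ (Relation.EqvGen.rel _ _ ?_) (ih hmid)
      exact Or.inl ⟨rfl, Or.inl rfl⟩

lemma conn_cells {i : ℕ} (hc : Conn lam lp i) :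
    (i, lam.rowLen i) ∈ S ∧ (i + 1, lam.rowLen i) ∈ S := by
  obtain ⟨h1, h2, h3⟩ := hc
  have ha : lam.rowLen (i+1) ≤ lam.rowLen i := lam.rowLen_anti i (i+1) (Nat.le_succ i)
  constructor <;> rw [mem_skew] <;> constructor <;> unfold NE at * <;> omega

lemma rel_of_chain (n : ℕ) : ∀ i j j' (hc : (i, j) ∈ S) (hd : (i + n, j') ∈ S),
    (∀ k, i ≤ k → k < i + n → Conn lam lp k) →
    Rel lam lp ⟨(i, j), hc⟩ ⟨(i + n, j'), hd⟩ := by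
  induction n with
  | zero => intro i j j' hc hd _; exact rel_of_row hc hd
  | succ m ih =>
    intro i j j' hc hd hconn
    have hcm : Conn lam lp (i + m) := hconn (i + m) (by omega) (by omega)
    obtain ⟨hc1, hc2⟩ := conn_cells hcm
    have step1 : Rel lam lp ⟨(i, j), hc⟩ ⟨(i + m, lam.rowLen (i + m)), hc1⟩ :=
      ih i j _ hc hc1 (fun k hk1 hk2 => hconn k hk1 (by omega))
    have step2 : Rel lam lp (⟨(i + m, lam.rowLen (i + m)), hc1⟩ : {c // c ∈ S})
        ⟨(i + m + 1, lam.rowLen (i + m)), hc2⟩ :=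
      Relation.EqvGen.rel _ _ (Or.inr ⟨rfl, Or.inr rfl⟩)
    have step3 : Rel lam lp (⟨(i + m + 1, lam.rowLen (i + m)), hc2⟩ : {c // c ∈ S})
        ⟨(i + (m + 1), j'), hd⟩ := rel_of_row hc2 hd
    exact Relation.EqvGen.trans _ _ _ (Relation.EqvGen.trans _ _ _ step1 step2) step3

lemma ftop_eq_of_adj {c d : {c // c ∈ S}} (hadj : CellAdj c.1 d.1) :
    ftop lam lp c.1.1 = ftop lam lp d.1.1 := by
  rcases hadj with ⟨he, _⟩ | ⟨he, hv⟩
  · rw [he]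
  · obtain ⟨⟨ci, cj⟩, hcm⟩ := c
    obtain ⟨⟨di, dj⟩, hdm⟩ := d
    simp only at he hv ⊢
    subst he
    rw [mem_skew] at hcm hdm
    rcases hv with h1 | h1
    · -- ci = di + 1
      subst h1
      have hcond : Conn lam lp di := ⟨lt_of_le_of_lt hdm.1 hdm.2,
        lt_of_le_of_lt hcm.1 hcm.2, lt_of_le_of_lt hdm.1 hcm.2⟩
      show ftop lam lp (di + 1) = _
      rw [ftop, if_pos hcond]
    · -- di = ci + 1
      subst h1
      have hcond : Conn lam lp ci := ⟨lt_of_le_of_lt hcm.1 hcm.2,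
        lt_of_le_of_lt hdm.1 hdm.2, lt_of_le_of_lt hcm.1 hdm.2⟩
      show _ = ftop lam lp (ci + 1)
      rw [ftop, if_pos hcond]

lemma ftop_eq_of_rel {c d : {c // c ∈ S}} (hr : Rel lam lp c d) :
    ftop lam lp c.1.1 = ftop lam lp d.1.1 := by
  induction hr with
  | rel x y hxy => exact ftop_eq_of_adj hxy
  | refl x => rfl
  | symm x y _ ih => exact ih.symm
  | trans x y z _ _ ih1 ih2 => exact ih1.trans ih2

lemma rel_of_ftop_eq {c d : {c // c ∈ S}} (heq : ftop lam lp c.1.1 = ftop lam lp d.1.1) :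
    Rel lam lp c d := by
  obtain ⟨⟨ci, cj⟩, hcm⟩ := c
  obtain ⟨⟨di, dj⟩, hdm⟩ := d
  simp only at heq
  rcases le_total ci di with hle | hle
  · have h2 : ftop lam lp di ≤ ci := heq ▸ ftop_le ci
    obtain ⟨_, hconn⟩ := ftop_chain di ci hle h2
    obtain ⟨n, rfl⟩ := Nat.exists_eq_add_of_le hle
    exact rel_of_chain n ci cj dj hcm hdm hconn
  · have h2 : ftop lam lp ci ≤ di := heq ▸ ftop_le di
    obtain ⟨_, hconn⟩ := ftop_chain ci di hle h2
    obtain ⟨n, rfl⟩ := Nat.exists_eq_add_of_le hle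
    exact Relation.EqvGen.symm _ _ (rel_of_chain n di dj cj hdm hcm hconn)

end Main

section Counting

variable (lam lp : YoungDiagram)

/-- Finset of free (top-of-component) rows. -/
noncomputable def freeF : Finset ℕ :=
  (Finset.range (lp.colLen 0)).filter (Free lam lp)

/-- Finset of nonempty rows. -/
noncomputable def neF : Finset ℕ :=
  (Finset.range (lp.colLen 0)).filter (NE lam lp)

variable {lam lp}

lemma lt_of_ne {i : ℕ} (hi : NE lam lp i) : i < lp.colLen 0 := by
  have : (i, 0) ∈ lp := YoungDiagram.mem_iff_lt_rowLen.2 (by unfold NE at hi; omega)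
  exact YoungDiagram.mem_iff_lt_colLen.1 this

lemma mem_freeF {i : ℕ} : i ∈ freeF lam lp ↔ Free lam lp i := by
  unfold freeF
  simp only [Finset.mem_filter, Finset.mem_range, and_iff_right_iff_imp]
  exact fun hf => lt_of_ne hf.1

lemma mem_neF {i : ℕ} : i ∈ neF lam lp ↔ NE lam lp i := by
  unfold neF
  simp only [Finset.mem_filter, Finset.mem_range, and_iff_right_iff_imp]
  exact fun hf => lt_of_ne hf

lemma cell_of_ne {i : ℕ} (hi : NE lam lp i) : (i, lam.rowLen i) ∈ skewCells lam lp := by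
  rw [mem_skew]; exact ⟨le_refl _, hi⟩

/-- The number of components equals the number of free rows. -/
lemma rib_eq (h : lam ≤ lp) : rib lam lp = (freeF lam lp).card := by
  have hwf : ∀ (c d : {c // c ∈ skewCells lam lp}),
      (componentSetoid (skewCells lam lp)).r c d →
      (fun c : {c // c ∈ skewCells lam lp} =>
        (⟨ftop lam lp c.1.1, mem_freeF.2 (ftop_free h c.1.1 (ne_of_mem
          (by rw [Prod.mk.eta]; exact c.2)))⟩ : {i // i ∈ freeF lam lp})) c =
      (fun c : {c // c ∈ skewCells lam lp} =>
        (⟨ftop lam lp c.1.1, mem_freeF.2 (ftop_free h c.1.1 (ne_of_mem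
          (by rw [Prod.mk.eta]; exact c.2)))⟩ : {i // i ∈ freeF lam lp})) d := by
    intro c d hr
    exact Subtype.ext (ftop_eq_of_rel hr)
  set F : SkewComponents (skewCells lam lp) → {i // i ∈ freeF lam lp} :=
    Quotient.lift _ hwf with hF
  have hinj : Function.Injective F := by
    intro x y
    induction x using Quotient.inductionOn with | h c =>
    induction y using Quotient.inductionOn with | h d =>
    intro hxy
    have : ftop lam lp c.1.1 = ftop lam lp d.1.1 := congrArg Subtype.val hxy
    exact Quotient.sound (rel_of_ftop_eq this)
  have hsurj : Function.Surjective F := by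
    rintro ⟨i, hi⟩
    have hfree : Free lam lp i := mem_freeF.1 hi
    refine ⟨Quotient.mk _ ⟨(i, lam.rowLen i), cell_of_ne hfree.1⟩, ?_⟩
    exact Subtype.ext (ftop_eq_self_of_free i hfree)
  have := Nat.card_eq_of_bijective F ⟨hinj, hsurj⟩
  rw [rib, ribSet, this, Nat.card_eq_finsetCard]

/-- The total number of (component, row) pairs equals the number of nonempty rows. -/
lemma rowpairs_eq : Nat.card (componentRowPairs (skewCells lam lp)) = (neF lam lp).card := by
  set G : componentRowPairs (skewCells lam lp) → {i // i ∈ neF lam lp} :=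
    fun p => ⟨p.1.2, by
      obtain ⟨⟨q, i⟩, ⟨c, hc1, hc2⟩⟩ := p
      simp only at hc2 ⊢
      rw [mem_neF, ← hc2]
      exact ne_of_mem (by rw [Prod.mk.eta]; exact c.2)⟩ with hG
  have hinj : Function.Injective G := by
    rintro ⟨⟨q, i⟩, ⟨c, hc1, hc2⟩⟩ ⟨⟨q', i'⟩, ⟨d, hd1, hd2⟩⟩ hxy
    have hii : i = i' := congrArg Subtype.val hxy
    subst hii
    refine Subtype.ext (Prod.ext ?_ rfl)
    show q = q'
    simp only at hc1 hd1 hc2 hd2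
    rw [← hc1, ← hd1]
    apply Quotient.sound
    obtain ⟨⟨ci, cj⟩, hcm⟩ := c
    obtain ⟨⟨di, dj⟩, hdm⟩ := d
    simp only at hc2 hd2
    subst hc2; subst hd2
    exact rel_of_row hcm hdm
  have hsurj : Function.Surjective G := by
    rintro ⟨i, hi⟩
    have hne : NE lam lp i := mem_neF.1 hi
    refine ⟨⟨⟨Quotient.mk _ ⟨(i, lam.rowLen i), cell_of_ne hne⟩, i⟩,
      ⟨⟨(i, lam.rowLen i), cell_of_ne hne⟩, rfl, rfl⟩⟩, rfl⟩
  rw [Nat.card_eq_of_bijective G ⟨hinj, hsurj⟩, Nat.card_eq_finsetCard]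

lemma freeF_subset_neF : freeF lam lp ⊆ neF lam lp := by
  intro i hi
  exact mem_neF.2 (mem_freeF.1 hi).1

/-- hgt equals the number of non-free nonempty rows. -/
lemma hgt_eq (h : lam ≤ lp) : hgt lam lp = (neF lam lp \ freeF lam lp).card := by
  rw [hgt, hgtSet, rowpairs_eq, ← rib, rib_eq h, Finset.card_sdiff_of_subset freeF_subset_neF]

end Counting


section Construct

variable (lam lp : YoungDiagram)

/-- Candidate row lengths given a choice function `g` on free rows. -/
noncomputable def choice (g : ℕ → Bool) (i : ℕ) : ℕ :=
  if Free lam lp i ∧ g i = true then lp.rowLen i else max (lam.rowLen i) (lp.rowLen i - 1)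

variable {lam lp}

lemma choice_ge (g : ℕ → Bool) (i : ℕ) : lam.rowLen i ≤ choice lam lp g i := by
  unfold choice
  split
  · next hc => exact le_of_lt hc.1.1
  · exact le_max_left _ _

lemma choice_le (h : lam ≤ lp) (g : ℕ → Bool) (i : ℕ) : choice lam lp g i ≤ lp.rowLen i := by
  have := rowLen_le_rowLen h i
  unfold choice
  split
  · exact le_refl _
  · omega

lemma choice_lb (g : ℕ → Bool) (i : ℕ) : lp.rowLen i - 1 ≤ choice lam lp g i := by
  unfold choice
  split
  · omega
  · omega

lemma choice_step (h : lam ≤ lp) (hbr : IsBrokenRibbon lam lp) (g : ℕ → Bool) (i : ℕ) :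
    choice lam lp g (i + 1) ≤ lam.rowLen i := by
  have ha : lam.rowLen (i+1) ≤ lam.rowLen i := lam.rowLen_anti i (i+1) (Nat.le_succ i)
  unfold choice
  split
  · next hc =>
    rcases hc.1.2 with h0 | hle
    · omega
    · simpa using hle
  · have : lp.rowLen (i+1) - 1 ≤ lam.rowLen i := by
      by_cases hne : NE lam lp (i+1)
      · have := br_step h hbr i hne
        omega
      · unfold NE at hne
        omega
    omega

lemma choice_anti (h : lam ≤ lp) (hbr : IsBrokenRibbon lam lp) (g : ℕ → Bool) :
    Antitone (choice lam lp g) :=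
  antitone_nat_of_succ_le fun i => le_trans (choice_step h hbr g i) (choice_ge g i)

/-- The Young diagram with row lengths `choice g`. -/
noncomputable def mkD (h : lam ≤ lp) (hbr : IsBrokenRibbon lam lp) (g : ℕ → Bool) :
    YoungDiagram where
  cells := lp.cells.filter (fun c => c.2 < choice lam lp g c.1)
  isLowerSet := by
    rintro ⟨i1, j1⟩ ⟨i2, j2⟩ hle hmem
    obtain ⟨hi, hj⟩ := Prod.mk_le_mk.1 hle
    simp only [Finset.coe_filter, Set.mem_setOf_eq, YoungDiagram.mem_cells] at hmem ⊢
    refine ⟨lp.up_left_mem hi hj hmem.1, ?_⟩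
    exact lt_of_le_of_lt hj (lt_of_lt_of_le hmem.2 (choice_anti h hbr g hi))

lemma mem_mkD (h : lam ≤ lp) (hbr : IsBrokenRibbon lam lp) (g : ℕ → Bool) (i j : ℕ) :
    (i, j) ∈ mkD h hbr g ↔ j < choice lam lp g i := by
  show (i, j) ∈ (mkD h hbr g).cells ↔ _
  unfold mkD
  simp only [Finset.mem_filter, YoungDiagram.mem_cells]
  constructor
  · exact fun hc => hc.2
  · intro hc
    refine ⟨?_, hc⟩
    exact YoungDiagram.mem_iff_lt_rowLen.2 (lt_of_lt_of_le hc (choice_le h g i))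

lemma rowLen_mkD (h : lam ≤ lp) (hbr : IsBrokenRibbon lam lp) (g : ℕ → Bool) (i : ℕ) :
    (mkD h hbr g).rowLen i = choice lam lp g i := by
  have key : ∀ j, j < (mkD h hbr g).rowLen i ↔ j < choice lam lp g i := by
    intro j
    rw [← YoungDiagram.mem_iff_lt_rowLen, mem_mkD]
  apply le_antisymm
  · rcases Nat.eq_zero_or_pos ((mkD h hbr g).rowLen i) with h0 | h0
    · omega
    · have := (key ((mkD h hbr g).rowLen i - 1)).1 (by omega)
      omega
  · rcases Nat.eq_zero_or_pos (choice lam lp g i) with h0 | h0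
    · omega
    · have := (key (choice lam lp g i - 1)).2 (by omega)
      omega

lemma eq_of_rowLen_eq {μ ν : YoungDiagram} (hr : ∀ i, μ.rowLen i = ν.rowLen i) : μ = ν := by
  apply SetLike.ext
  rintro ⟨i, j⟩
  rw [YoungDiagram.mem_iff_lt_rowLen, YoungDiagram.mem_iff_lt_rowLen, hr i]

lemma le_mkD (h : lam ≤ lp) (hbr : IsBrokenRibbon lam lp) (g : ℕ → Bool) :
    lam ≤ mkD h hbr g := by
  rw [SetLike.le_def]
  rintro ⟨i, j⟩ hc
  rw [YoungDiagram.mem_iff_lt_rowLen] at hc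
  rw [mem_mkD]
  exact lt_of_lt_of_le hc (choice_ge g i)

lemma mkD_le (h : lam ≤ lp) (hbr : IsBrokenRibbon lam lp) (g : ℕ → Bool) :
    mkD h hbr g ≤ lp := by
  rw [SetLike.le_def]
  rintro ⟨i, j⟩ hc
  rw [mem_mkD] at hc
  rw [YoungDiagram.mem_iff_lt_rowLen]
  exact lt_of_lt_of_le hc (choice_le h g i)

lemma hs_mkD (h : lam ≤ lp) (hbr : IsBrokenRibbon lam lp) (g : ℕ → Bool) :
    IsHorizontalStrip lam (mkD h hbr g) := by
  intro i j ⟨h1, h2⟩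
  rw [mem_skew] at h1 h2
  rw [rowLen_mkD] at h1 h2
  have := choice_step h hbr g i
  omega

lemma vs_mkD (h : lam ≤ lp) (hbr : IsBrokenRibbon lam lp) (g : ℕ → Bool) :
    IsVerticalStrip (mkD h hbr g) lp := by
  intro i j ⟨h1, h2⟩
  rw [mem_skew, rowLen_mkD] at h1 h2
  have := choice_lb (lam := lam) (lp := lp) g i
  omega

lemma choice_congr {g g' : ℕ → Bool} (hgg : ∀ i, Free lam lp i → g i = g' i) (i : ℕ) :
    choice lam lp g i = choice lam lp g' i := by
  unfold choice
  by_cases hf : Free lam lp i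
  · rw [hgg i hf]
  · rw [if_neg (fun hc => hf hc.1), if_neg (fun hc => hf hc.1)]

variable {l' : YoungDiagram}

lemma r_lb (h2 : l' ≤ lp) (hvs : IsVerticalStrip l' lp) (i : ℕ) :
    lp.rowLen i - 1 ≤ l'.rowLen i := by
  by_contra hc
  push_neg at hc
  refine hvs i (l'.rowLen i) ⟨?_, ?_⟩ <;> rw [mem_skew] <;> omega

lemma r_step (h1 : lam ≤ l') (hhs : IsHorizontalStrip lam l') (i : ℕ) :
    l'.rowLen (i + 1) ≤ lam.rowLen i := by
  by_contra hc
  push_neg at hc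
  have ha : lam.rowLen (i+1) ≤ lam.rowLen i := lam.rowLen_anti i (i+1) (Nat.le_succ i)
  have hr : l'.rowLen (i+1) ≤ l'.rowLen i := l'.rowLen_anti i (i+1) (Nat.le_succ i)
  refine hhs i (lam.rowLen i) ⟨?_, ?_⟩ <;> rw [mem_skew] <;> omega

lemma r_ne_top (h1 : lam ≤ l') (hhs : IsHorizontalStrip lam l') {i : ℕ}
    (hne : NE lam lp i) (hnf : ¬ Free lam lp i) : l'.rowLen i ≠ lp.rowLen i := by
  unfold Free at hnf
  push_neg at hnf
  obtain ⟨hi0, hlt⟩ := hnf hne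
  cases i with
  | zero => exact absurd rfl hi0
  | succ k =>
    have := r_step h1 hhs k
    simp only [Nat.add_sub_cancel] at hlt
    omega

lemma eq_mkD (h : lam ≤ lp) (hbr : IsBrokenRibbon lam lp)
    (h1 : lam ≤ l') (h2 : l' ≤ lp) (hhs : IsHorizontalStrip lam l')
    (hvs : IsVerticalStrip l' lp) :
    l' = mkD h hbr (fun i => decide (l'.rowLen i = lp.rowLen i)) := by
  apply eq_of_rowLen_eq
  intro i
  rw [rowLen_mkD]
  have hge : lam.rowLen i ≤ l'.rowLen i := rowLen_le_rowLen h1 i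
  have hle : l'.rowLen i ≤ lp.rowLen i := rowLen_le_rowLen h2 i
  have hlb : lp.rowLen i - 1 ≤ l'.rowLen i := r_lb h2 hvs i
  unfold choice
  split
  · next hc => exact of_decide_eq_true hc.2
  · next hc =>
    by_cases hne : NE lam lp i
    · have hr_ne : l'.rowLen i ≠ lp.rowLen i := by
        by_cases hfree : Free lam lp i
        · intro he
          exact hc ⟨hfree, decide_eq_true he⟩
        · exact r_ne_top h1 hhs hne hfree
      unfold NE at hne
      omega
    · unfold NE at hne
      omega

end Construct

end StripAux

/-- **Counting strip decompositions of a broken ribbon.** -/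
theorem count_strip_decompositions
    (lam lp : YoungDiagram) (h : lam ≤ lp) (hbr : IsBrokenRibbon lam lp) :
    Nat.card {l' : YoungDiagram //
        lam ≤ l' ∧ l' ≤ lp ∧ IsHorizontalStrip lam l' ∧ IsVerticalStrip l' lp} =
      2 ^ rib lam lp ∧
    ∀ l' : YoungDiagram, lam ≤ l' → l' ≤ lp → IsHorizontalStrip lam l' →
      IsVerticalStrip l' lp → hgt lam lp ≤ skewSize l' lp := by
  constructor
  · -- the count
    have E : {l' : YoungDiagram //
        lam ≤ l' ∧ l' ≤ lp ∧ IsHorizontalStrip lam l' ∧ IsVerticalStrip l' lp} ≃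
        ({i // i ∈ StripAux.freeF lam lp} → Bool) :=
      { toFun := fun l' i => decide (l'.1.rowLen i.1 = lp.rowLen i.1)
        invFun := fun G => ⟨StripAux.mkD h hbr
            (fun i => if hi : i ∈ StripAux.freeF lam lp then G ⟨i, hi⟩ else false),
          StripAux.le_mkD h hbr _, StripAux.mkD_le h hbr _,
          StripAux.hs_mkD h hbr _, StripAux.vs_mkD h hbr _⟩
        left_inv := by
          rintro ⟨l', hl1, hl2, hl3, hl4⟩
          apply Subtype.ext
          show StripAux.mkD h hbr _ = l'
          have hmain := StripAux.eq_mkD h hbr hl1 hl2 hl3 hl4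
          have hstep : StripAux.mkD h hbr
              (fun i => if hi : i ∈ StripAux.freeF lam lp
                then decide (l'.rowLen i = lp.rowLen i) else false) =
              StripAux.mkD h hbr (fun i => decide (l'.rowLen i = lp.rowLen i)) := by
            apply StripAux.eq_of_rowLen_eq
            intro i
            rw [StripAux.rowLen_mkD, StripAux.rowLen_mkD]
            apply StripAux.choice_congr
            intro i' hf
            rw [dif_pos (StripAux.mem_freeF.2 hf)]
          exact hstep.trans hmain.symm
        right_inv := by
          intro G
          funext i
          obtain ⟨i, hi⟩ := i
          show decide ((StripAux.mkD h hbr _).rowLen i = lp.rowLen i) = G ⟨i, hi⟩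
          rw [StripAux.rowLen_mkD]
          have hfree := StripAux.mem_freeF.1 hi
          have hne : lam.rowLen i < lp.rowLen i := hfree.1
          cases hGi : G ⟨i, hi⟩ with
          | true =>
            have hch : StripAux.choice lam lp
                (fun i => if hi : i ∈ StripAux.freeF lam lp then G ⟨i, hi⟩ else false) i =
                lp.rowLen i := by
              unfold StripAux.choice
              rw [if_pos ⟨hfree, by simp only [dif_pos hi, hGi]⟩]
            rw [hch]
            exact decide_eq_true rfl
          | false =>
            have hch : StripAux.choice lam lp
                (fun i => if hi : i ∈ StripAux.freeF lam lp then G ⟨i, hi⟩ else false) i =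
                max (lam.rowLen i) (lp.rowLen i - 1) := by
              unfold StripAux.choice
              rw [if_neg]
              intro hc
              have h2 := hc.2
              simp only [dif_pos hi, hGi] at h2
              exact Bool.false_ne_true h2
            rw [hch]
            apply decide_eq_false
            omega }
    rw [Nat.card_congr E, Nat.card_eq_fintype_card, Fintype.card_fun, Fintype.card_coe,
      Fintype.card_bool, StripAux.rib_eq h]
  · -- the inequality
    intro l' h1 h2 h3 h4
    rw [StripAux.hgt_eq h, skewSize]
    apply Finset.card_le_card_of_injOn (fun i => (i, l'.rowLen i))
    · intro i hi
      rw [Finset.mem_coe, Finset.mem_sdiff] at hi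
      obtain ⟨hin, hnf⟩ := hi
      have hne := StripAux.mem_neF.1 hin
      have hnfree : ¬ StripAux.Free lam lp i := fun hf => hnf (StripAux.mem_freeF.2 hf)
      have hrt := StripAux.r_ne_top h1 h3 hne hnfree
      have hle := StripAux.rowLen_le_rowLen h2 i
      show (i, l'.rowLen i) ∈ skewCells l' lp
      rw [StripAux.mem_skew]
      have : lam.rowLen i < lp.rowLen i := hne
      exact ⟨le_refl _, by omega⟩
    · intro i _ j _ he
      exact congrArg Prod.fst he
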